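/- Let A be a (possibly noncommutative) ring with identity and let N_1, …, N_s be pairwise non-isomorphic left A-modules, each having a local endomorphism ring with Jacobson radical 𝔪_j and residue division ring D_j = End_A(N_j)/𝔪_j. Set N = N_1 ⊕ ⋯ ⊕ N_s and E = End_A(N). Then the assignment sending an automorphism f of N to the tuple of classes ([π_j ∘ f ∘ ι_j mod 𝔪_j])_{j=1,…,s} induces a surjective group homomorphism from the abelianization (Eˣ)_ab of the unit group of E onto (D_1ˣ)_ab × ⋯ × (D_sˣ)_ab. -/

import Mathlib

section LocalAux
variable {R : Type*} [Ring R] [IsLocalRing R]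

lemma myIdem (e : R) (h : e * e = e) : e = 0 ∨ e = 1 := by
  rcases IsLocalRing.isUnit_or_isUnit_of_add_one (a := e) (b := 1 - e) (by noncomm_ring)
    with hu | hu
  · right
    exact hu.mul_left_cancel (by rw [h, mul_one])
  · left
    have h2 : (1 - e) * (1 - e) = 1 - e := by
      have : (1 - e) * (1 - e) = 1 - e - e + e * e := by noncomm_ring
      rw [this, h]; noncomm_ring
    have h3 : (1 - e) = 1 := hu.mul_left_cancel (by rw [h2, mul_one])
    exact sub_eq_self.mp h3

lemma myLeftInvUnit {x y : R} (h : y * x = 1) : IsUnit x := by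
  have hid : (x * y) * (x * y) = x * y := by
    rw [mul_assoc, ← mul_assoc y x, h, one_mul]
  rcases myIdem _ hid with h0 | h1
  · exfalso
    have : (1 : R) = 0 := by
      calc (1 : R) = (y * x) * (y * x) := by rw [h, one_mul]
        _ = y * (x * y) * x := by noncomm_ring
        _ = 0 := by rw [h0, mul_zero, zero_mul]
    exact one_ne_zero this
  · exact ⟨⟨x, y, h1, h⟩, rfl⟩

lemma myNonunitMemJac {x : R} (h : ¬IsUnit x) : x ∈ Ideal.jacobson (⊥ : Ideal R) := by
  rw [Ideal.mem_jacobson_iff]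
  intro y
  have hyx : ¬IsUnit (y * x) := by
    rintro ⟨u, hu⟩
    refine h (myLeftInvUnit (y := ↑u⁻¹ * y) ?_)
    rw [mul_assoc, ← hu, Units.inv_mul]
  have hone : IsUnit (y * x + 1) := by
    rcases IsLocalRing.isUnit_or_isUnit_of_add_one (a := y * x + 1) (b := -(y * x))
      (by abel) with h1 | h1
    · exact h1
    · exact absurd (by simpa using h1.neg) hyx
  obtain ⟨u, hu⟩ := hone
  refine ⟨↑u⁻¹, ?_⟩
  rw [Ideal.mem_bot, sub_eq_zero, mul_assoc, ← mul_add_one, ← hu, Units.inv_mul]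

lemma myJacMemNonunit {x : R} (h : x ∈ Ideal.jacobson (⊥ : Ideal R)) : ¬IsUnit x := by
  obtain ⟨M, hM⟩ := Ideal.exists_maximal R
  have hxM : x ∈ M := Ideal.mem_sInf.mp h ⟨bot_le, hM⟩
  intro hu
  exact hM.ne_top (M.eq_top_of_isUnit_mem hxM hu)

end LocalAux


lemma myCross {A : Type*} [Ring A] {M P : Type*} [AddCommGroup M] [Module A M]
    [AddCommGroup P] [Module A P]
    [IsLocalRing (Module.End A M)] [IsLocalRing (Module.End A P)]
    (hne : IsEmpty (M ≃ₗ[A] P)) (a : P →ₗ[A] M) (b : M →ₗ[A] P) :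
    ¬IsUnit (a ∘ₗ b : Module.End A M) := by
  rintro ⟨u, hu⟩
  set c : Module.End A M := ↑u⁻¹ with hc
  have key : ∀ z : M, c (a (b z)) = z := by
    intro z
    have : (c * ↑u) z = z := by rw [Units.inv_mul]; rfl
    rw [hu] at this
    exact this
  set e : Module.End A P := b ∘ₗ c ∘ₗ a with he
  have hee : e * e = e := by
    apply LinearMap.ext
    intro z
    show b (c (a (b (c (a z))))) = b (c (a z))
    rw [key (c (a z))]
  rcases myIdem e hee with h0 | h1
  · -- then u = 0, contradiction with nontrivial End M
    have hu0 : (↑u : Module.End A M) = 0 := by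
      apply LinearMap.ext
      intro z
      have h1 : (↑u : Module.End A M) z = a (b z) := by rw [hu]; rfl
      have h2 : (↑u : Module.End A M) z = a (e (b (c ((↑u : Module.End A M) z)))) := by
        rw [he]
        show (↑u : Module.End A M) z = a (b (c (a (b (c ((↑u : Module.End A M) z))))))
        rw [key, h1, key]
      rw [h2, h0]
      simp
    have : (1 : Module.End A M) = 0 := by
      have := u.inv_mul
      rw [hu0, mul_zero] at this
      exact this.symm
    exact one_ne_zero this
  · -- e = 1 gives an isomorphism M ≃ₗ P
    refine hne.elim (LinearEquiv.ofLinear b (c ∘ₗ a) ?_ ?_)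
    · -- b ∘ (c ∘ a) = id on P
      apply LinearMap.ext
      intro z
      have : e z = z := by rw [h1]; rfl
      exact this
    · -- (c ∘ a) ∘ b = id on M
      apply LinearMap.ext
      intro z
      exact key z

section Main

variable {A : Type*} [Ring A] {s : ℕ} (N : Fin s → Type*)
    [∀ j, AddCommGroup (N j)] [∀ j, Module A (N j)]

/-- (j,k)-component of an endomorphism of the direct sum. -/
def myCmp (j k : Fin s) (f : Module.End A (∀ i, N i)) : N k →ₗ[A] N j :=
  (LinearMap.proj j) ∘ₗ (f : (∀ i, N i) →ₗ[A] (∀ i, N i)) ∘ₗ (LinearMap.single A N k)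

lemma myCmpMul (j : Fin s) (f g : Module.End A (∀ i, N i)) :
    myCmp N j j (f * g) = ∑ k, (myCmp N j k f) ∘ₗ (myCmp N k j g) := by
  apply LinearMap.ext
  intro x
  simp only [myCmp, LinearMap.comp_apply, LinearMap.sum_apply, LinearMap.proj_apply,
    LinearMap.coe_single, Module.End.mul_apply]
  have : f (g (Pi.single j x)) = f (∑ k, Pi.single k ((g (Pi.single j x)) k)) := by
    rw [Finset.univ_sum_single]
  rw [this, map_sum]
  simp

lemma myCmpOne (j : Fin s) : myCmp N j j (1 : Module.End A (∀ i, N i)) = 1 := by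
  apply LinearMap.ext
  intro x
  simp [myCmp]

variable (hloc : ∀ j, IsLocalRing (Module.End A (N j)))
    (hpair : ∀ i j, i ≠ j → IsEmpty (N i ≃ₗ[A] N j))
    (D : Fin s → Type*) [∀ j, DivisionRing (D j)]
    (q : ∀ j, Module.End A (N j) →+* D j)
    (hq : ∀ j, Function.Surjective (q j))
    (hker : ∀ j, RingHom.ker (q j) = Ideal.jacobson (⊥ : Ideal (Module.End A (N j))))

include hloc hpair hker in
lemma myQMul (j : Fin s) (f g : Module.End A (∀ i, N i)) :
    q j (myCmp N j j (f * g)) = q j (myCmp N j j f) * q j (myCmp N j j g) := by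
  haveI := hloc j
  rw [myCmpMul, map_sum, Finset.sum_eq_single j]
  · rw [← map_mul]
    rfl
  · intro k _ hkj
    haveI := hloc k
    rw [← RingHom.mem_ker, hker j]
    exact myNonunitMemJac (myCross (hpair j k (Ne.symm hkj)) (myCmp N j k f) (myCmp N k j g))
  · intro h
    exact absurd (Finset.mem_univ j) h

include hloc hpair hker in
lemma myQUnit (j : Fin s) (f : (Module.End A (∀ i, N i))ˣ) :
    q j (myCmp N j j (f : Module.End A (∀ i, N i)))
      * q j (myCmp N j j ((f⁻¹ : _ˣ) : Module.End A (∀ i, N i))) = 1 := by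
  rw [← myQMul N hloc hpair D q hker, Units.mul_inv, myCmpOne, map_one]

include hloc hpair hker in
lemma myQUnit' (j : Fin s) (f : (Module.End A (∀ i, N i))ˣ) :
    q j (myCmp N j j ((f⁻¹ : _ˣ) : Module.End A (∀ i, N i)))
      * q j (myCmp N j j (f : Module.End A (∀ i, N i))) = 1 := by
  rw [← myQMul N hloc hpair D q hker, Units.inv_mul, myCmpOne, map_one]

/-- The induced unit of `D j` attached to a unit of `End(⊕ N i)`. -/
def myUQ (j : Fin s) (f : (Module.End A (∀ i, N i))ˣ) : (D j)ˣ :=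
  ⟨q j (myCmp N j j (f : Module.End A (∀ i, N i))),
   q j (myCmp N j j ((f⁻¹ : _ˣ) : Module.End A (∀ i, N i))),
   myQUnit N hloc hpair D q hker j f, myQUnit' N hloc hpair D q hker j f⟩

/-- The tuple-of-diagonal-classes monoid homomorphism. -/
def myPsi : (Module.End A (∀ i, N i))ˣ →* (∀ j, Abelianization (D j)ˣ) where
  toFun f j := Abelianization.of (myUQ N hloc hpair D q hker j f)
  map_one' := by
    funext j
    have h1 : myUQ N hloc hpair D q hker j 1 = 1 := by
      apply Units.ext
      show q j (myCmp N j j ((1 : (Module.End A (∀ i, N i))ˣ) : Module.End A (∀ i, N i))) = 1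
      rw [Units.val_one, myCmpOne, map_one]
    show Abelianization.of (myUQ N hloc hpair D q hker j 1) = 1
    rw [h1, map_one]
  map_mul' f g := by
    funext j
    have h1 : myUQ N hloc hpair D q hker j (f * g)
        = myUQ N hloc hpair D q hker j f * myUQ N hloc hpair D q hker j g := by
      apply Units.ext
      show q j (myCmp N j j (((f * g : _ˣ)) : Module.End A (∀ i, N i))) = _
      rw [Units.val_mul, myQMul N hloc hpair D q hker]
      rfl
    show Abelianization.of (myUQ N hloc hpair D q hker j (f * g)) = _
    rw [h1, map_mul]
    rfl

end Main

/-- With `N = N 1 ⊕ ⋯ ⊕ N s` (the `N j` pairwise non-isomorphic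
with local endomorphism rings) and `D j` the residue division ring of
`End_A (N j)` (presented via surjective ring homomorphisms `q j` with kernel
the Jacobson radical), sending an automorphism `f` of `N` to the tuple of
classes of its diagonal components induces a surjective group homomorphism
`(Eˣ)_ab → (D 1ˣ)_ab × ⋯ × (D sˣ)_ab`, where `E = End_A N`. -/
theorem stmt3 {A : Type*} [Ring A] {s : ℕ} (N : Fin s → Type*)
    [∀ j, AddCommGroup (N j)] [∀ j, Module A (N j)]
    (hloc : ∀ j, IsLocalRing (Module.End A (N j)))
    (hpair : ∀ i j, i ≠ j → IsEmpty (N i ≃ₗ[A] N j))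
    (D : Fin s → Type*) [∀ j, DivisionRing (D j)]
    (q : ∀ j, Module.End A (N j) →+* D j)
    (hq : ∀ j, Function.Surjective (q j))
    (hker : ∀ j, RingHom.ker (q j) = Ideal.jacobson (⊥ : Ideal (Module.End A (N j)))) :
    ∃ Φ : Abelianization (Module.End A (∀ j, N j))ˣ →* (∀ j, Abelianization (D j)ˣ),
      Function.Surjective Φ ∧
      ∀ (f : (Module.End A (∀ j, N j))ˣ) (j : Fin s) (u : (D j)ˣ),
        (u : D j) = q j ((LinearMap.proj j) ∘ₗ
            ((f : Module.End A (∀ i, N i)) : (∀ i, N i) →ₗ[A] (∀ i, N i)) ∘ₗ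
            (LinearMap.single A N j)) →
        Φ (Abelianization.of f) j = Abelianization.of u := by
  classical
  refine ⟨Abelianization.lift (myPsi N hloc hpair D q hker), ?_, ?_⟩
  · -- surjectivity
    intro x
    have hx : ∀ j, ∃ u : (D j)ˣ, Abelianization.of u = x j := by
      intro j
      obtain ⟨u, hu⟩ := Quot.exists_rep (x j)
      exact ⟨u, hu⟩
    choose u hu using hx
    have hg' : ∀ j, ∃ gj : Module.End A (N j), q j gj = ↑(u j) := fun j => hq j _
    choose g hg using hg'
    have hgu : ∀ j, IsUnit (g j) := by
      intro j
      haveI := hloc j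
      by_contra h
      have h2 : g j ∈ RingHom.ker (q j) := by rw [hker j]; exact myNonunitMemJac h
      rw [RingHom.mem_ker] at h2
      exact Units.ne_zero (u j) (by rw [← hg j, h2])
    choose G hG using hgu
    set F : Module.End A (∀ i, N i) := LinearMap.pi (fun i => (g i) ∘ₗ LinearMap.proj i) with hF
    set F' : Module.End A (∀ i, N i) :=
      LinearMap.pi (fun i => (((G i)⁻¹ : (Module.End A (N i))ˣ) : Module.End A (N i)) ∘ₗ
        LinearMap.proj i) with hF'
    have hFF' : F * F' = 1 := by
      apply LinearMap.ext
      intro x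
      funext i
      show g i ((((G i)⁻¹ : (Module.End A (N i))ˣ) : Module.End A (N i)) (x i)) = x i
      rw [← hG i]
      have : ((G i : Module.End A (N i)) * (((G i)⁻¹ : (Module.End A (N i))ˣ) :
          Module.End A (N i))) (x i) = (1 : Module.End A (N i)) (x i) := by
        rw [Units.mul_inv]
      exact this
    have hF'F : F' * F = 1 := by
      apply LinearMap.ext
      intro x
      funext i
      show (((G i)⁻¹ : (Module.End A (N i))ˣ) : Module.End A (N i)) (g i (x i)) = x i
      rw [← hG i]
      have : ((((G i)⁻¹ : (Module.End A (N i))ˣ) : Module.End A (N i)) *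
          (G i : Module.End A (N i))) (x i) = (1 : Module.End A (N i)) (x i) := by
        rw [Units.inv_mul]
      exact this
    refine ⟨Abelianization.of (⟨F, F', hFF', hF'F⟩ : (Module.End A (∀ i, N i))ˣ), ?_⟩
    rw [Abelianization.lift_apply_of]
    funext j
    show Abelianization.of (myUQ N hloc hpair D q hker j ⟨F, F', hFF', hF'F⟩) = x j
    have hcmp : myCmp N j j F = g j := by
      apply LinearMap.ext
      intro y
      show g j ((Pi.single j y : ∀ i, N i) j) = g j y
      rw [Pi.single_eq_same]
    have : myUQ N hloc hpair D q hker j ⟨F, F', hFF', hF'F⟩ = u j := by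
      apply Units.ext
      show q j (myCmp N j j F) = ↑(u j)
      rw [hcmp, hg j]
    rw [this, hu j]
  · -- compatibility
    intro f j v hv
    rw [Abelianization.lift_apply_of]
    show Abelianization.of (myUQ N hloc hpair D q hker j f) = Abelianization.of v
    have : myUQ N hloc hpair D q hker j f = v := Units.ext hv.symm
    rw [this]
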